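/- Let ℓ ≥ 1 be a natural number, and let q_ℓ : ℤ/2^ℓℤ → ℚ/ℤ be the quadratic function q_ℓ(x) = (x̄² / 2^(ℓ+1)) mod ℤ, where x̄ is the canonical representative of x in {0,…,2^ℓ−1}. For an integer m, there exists a function ς : ℤ/2^ℓℤ × ℤ/2^ℓℤ → ℚ/ℤ, additive in each variable, with m • q_ℓ(x) = ς(x,x) for all x, if and only if m is even. (Equivalently, J(ℤ/2^ℓℤ) := coker(Hom(B ⊗ B, ℚ/ℤ) → Q(B,ℚ/ℤ)) for B = ℤ/2^ℓℤ is cyclic of order 2.) -/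

import Mathlib

/-- ℚ/ℤ. -/
abbrev QZ := AddCircle (1 : ℚ)

/-- A biadditive form on an abelian group with values in ℚ/ℤ. -/
def IsBiadditive {A : Type*} [AddCommGroup A] (ς : A → A → QZ) : Prop :=
  (∀ x x' y : A, ς (x + x') y = ς x y + ς x' y) ∧
  (∀ x y y' : A, ς x (y + y') = ς x y + ς x y')

/-- The standard generator `q_ℓ(x) = x̄²/2^(ℓ+1)` of the group of quadratic
functions on `ℤ/2^ℓℤ`. -/
noncomputable def qGen (ℓ : ℕ) (x : ZMod (2 ^ ℓ)) : QZ :=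
  (((x.val ^ 2 : ℚ) / 2 ^ (ℓ + 1) : ℚ) : QZ)

lemma coe_eq_coe_of_int (r s : ℚ) (n : ℤ) (h : r - s = n) : (r : QZ) = (s : QZ) :=
  sub_eq_zero.mp (by
    have h0 : ((r - s : ℚ) : QZ) = 0 := by
      rw [h]; exact (AddCircle.coe_eq_zero_iff _).2 ⟨n, by simp⟩
    exact h0)

theorem multiple_of_qGen_diagonal_iff_even (ℓ : ℕ) (hℓ : 1 ≤ ℓ) (m : ℤ) :
    (∃ ς : ZMod (2 ^ ℓ) → ZMod (2 ^ ℓ) → QZ, IsBiadditive ς ∧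
      ∀ x : ZMod (2 ^ ℓ), m • qGen ℓ x = ς x x) ↔ Even m := by
  have h2 : (1 : ℕ) < 2 ^ ℓ := by
    calc (1:ℕ) < 2 ^ 1 := by norm_num
    _ ≤ 2 ^ ℓ := Nat.pow_le_pow_right (by norm_num) hℓ
  haveI : NeZero (2 ^ ℓ) := ⟨by omega⟩
  haveI : Fact (1 < 2 ^ ℓ) := ⟨h2⟩
  have h2ℓ : (2:ℚ) ^ ℓ ≠ 0 := by positivity
  have h2ℓ' : (2:ℚ) ^ (ℓ + 1) ≠ 0 := by positivity
  constructor
  · rintro ⟨ς, ⟨hadd, _⟩, hdiag⟩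
    have hz : ς 0 1 = 0 := by
      have := hadd 0 0 1
      simp only [add_zero] at this
      exact (left_eq_add.mp this)
    set f : ZMod (2 ^ ℓ) →+ QZ := AddMonoidHom.mk' (fun x => ς x 1)
      (fun a b => hadd a b 1) with hf
    have key : (2 ^ ℓ : ℕ) • ς 1 1 = 0 := by
      have h1 : f ((2 ^ ℓ : ℕ) • (1 : ZMod (2 ^ ℓ))) = (2 ^ ℓ : ℕ) • f 1 :=
        map_nsmul f (2 ^ ℓ) (1 : ZMod (2 ^ ℓ))
      rw [show (2 ^ ℓ : ℕ) • (1 : ZMod (2 ^ ℓ)) = 0 by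
        simp [nsmul_eq_mul, ZMod.natCast_self]] at h1
      simpa [hf, hz] using h1.symm
    have hq1 : ς 1 1 = m • ((1 / 2 ^ (ℓ + 1) : ℚ) : QZ) := by
      rw [← hdiag 1]
      congr 1
      unfold qGen
      rw [ZMod.val_one _]
      norm_num
    rw [hq1] at key
    have key2 : (((2 ^ ℓ : ℕ) • (m • (1 / 2 ^ (ℓ + 1) : ℚ)) : ℚ) : QZ) = 0 := key
    rw [AddCircle.coe_eq_zero_iff] at key2
    obtain ⟨n, hn⟩ := key2
    simp only [smul_eq_mul, zsmul_eq_mul, nsmul_eq_mul] at hn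
    have hm : (m : ℚ) = 2 * n := by
      push_cast at hn
      have h21 : ((2:ℚ)) ^ (ℓ+1) = 2 * 2 ^ ℓ := by ring
      field_simp [h21] at hn
      have := mul_left_cancel₀ h2ℓ (show (2:ℚ)^ℓ * (2 * n) = 2^ℓ * m by linear_combination hn)
      linarith
    have : m = 2 * n := by exact_mod_cast hm
    exact ⟨n, by omega⟩
  · rintro ⟨k, hk⟩
    have hmk : (m : ℚ) = 2 * k := by rw [hk]; push_cast; ring
    refine ⟨fun x y => (((k : ℚ) * x.val * y.val / 2 ^ ℓ : ℚ) : QZ), ⟨?_, ?_⟩, ?_⟩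
    · intro x x' y
      set d : ℤ := ((x.val + x'.val : ℕ) : ℤ) / 2 ^ ℓ with hd
      have hval : ((x + x').val : ℤ) = (x.val : ℤ) + x'.val - 2 ^ ℓ * d := by
        have h1 : ((x + x').val : ℤ) = ((x.val + x'.val : ℕ) : ℤ) % (2 ^ ℓ : ℕ) := by
          rw [ZMod.val_add]; push_cast; ring
        rw [h1, Int.emod_def, hd]
        push_cast
        ring
      have hvq : ((x + x').val : ℚ) = (x.val : ℚ) + x'.val - 2 ^ ℓ * (d : ℚ) := by
        exact_mod_cast congrArg (fun z : ℤ => (z : ℚ)) hval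
      symm
      apply coe_eq_coe_of_int _ _ (k * d * y.val)
      show ((k : ℚ) * x.val * y.val / 2 ^ ℓ + (k : ℚ) * x'.val * y.val / 2 ^ ℓ)
          - (k : ℚ) * ((x + x').val : ℚ) * y.val / 2 ^ ℓ = ((k * d * y.val : ℤ) : ℚ)
      rw [hvq]
      push_cast
      field_simp
      ring
    · intro x y y'
      set d : ℤ := ((y.val + y'.val : ℕ) : ℤ) / 2 ^ ℓ with hd
      have hval : ((y + y').val : ℤ) = (y.val : ℤ) + y'.val - 2 ^ ℓ * d := by
        have h1 : ((y + y').val : ℤ) = ((y.val + y'.val : ℕ) : ℤ) % (2 ^ ℓ : ℕ) := by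
          rw [ZMod.val_add]; push_cast; ring
        rw [h1, Int.emod_def, hd]
        push_cast
        ring
      have hvq : ((y + y').val : ℚ) = (y.val : ℚ) + y'.val - 2 ^ ℓ * (d : ℚ) := by
        exact_mod_cast congrArg (fun z : ℤ => (z : ℚ)) hval
      symm
      apply coe_eq_coe_of_int _ _ (k * x.val * d)
      show ((k : ℚ) * x.val * y.val / 2 ^ ℓ + (k : ℚ) * x.val * y'.val / 2 ^ ℓ)
          - (k : ℚ) * x.val * ((y + y').val : ℚ) / 2 ^ ℓ = ((k * x.val * d : ℤ) : ℚ)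
      rw [hvq]
      push_cast
      field_simp
      ring
    · intro x
      unfold qGen
      have hsm : m • (((x.val ^ 2 : ℚ) / 2 ^ (ℓ + 1) : ℚ) : QZ)
          = (((m : ℚ) * ((x.val ^ 2 : ℚ) / 2 ^ (ℓ + 1)) : ℚ) : QZ) := by
        rw [show ((m : ℚ) * ((x.val ^ 2 : ℚ) / 2 ^ (ℓ + 1)) : ℚ)
            = m • ((x.val ^ 2 : ℚ) / 2 ^ (ℓ + 1) : ℚ) by rw [zsmul_eq_mul]]
        rfl
      rw [hsm]
      apply coe_eq_coe_of_int _ _ 0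
      rw [hmk]
      have h21 : ((2:ℚ)) ^ (ℓ+1) = 2 * 2 ^ ℓ := by ring
      rw [h21]
      field_simp
      ring
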